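/- Let A be a commutative multiplicative hyperring with identity, let Q be a (u,v)-absorbing strong 𝒞-hyperideal of A for u,v ∈ ℕ with 2 ≤ v < u, and suppose Q₁,…,Q_v are the only minimal prime 𝒞-hyperideals over Q. If zᵢ ∈ Qᵢ∖(⋃_{j≠i}Q_j) for each i, then for every j, Q_j ∘ ∏_{i≠j} zᵢ ⊆ Q. -/

import Mathlib

/-- A commutative multiplicative hyperring with identity: `(A,+)` is a commutative group,
`∘ = hmul` is a commutative associative hyperoperation with nonempty values, satisfying
`x∘(y+z) ⊆ x∘y + x∘z`, `x∘(−y) = (−x)∘y = −(x∘y)`, and `a ∈ a∘1` for all `a`. -/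
class CommHyperring (A : Type*) [AddCommGroup A] [One A] where
  hmul : A → A → Set A
  hmul_nonempty : ∀ x y : A, (hmul x y).Nonempty
  hmul_comm : ∀ x y : A, hmul x y = hmul y x
  hmul_assoc : ∀ x y z : A, (⋃ a ∈ hmul y z, hmul x a) = ⋃ b ∈ hmul x y, hmul b z
  hmul_add : ∀ x y z : A, hmul x (y + z) ⊆ Set.image2 (· + ·) (hmul x y) (hmul x z)
  hmul_neg : ∀ x y : A, hmul x (-y) = Neg.neg '' hmul x y
  neg_hmul : ∀ x y : A, hmul (-x) y = Neg.neg '' hmul x y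
  one_mem : ∀ a : A, a ∈ hmul a 1

open CommHyperring

variable {A : Type*} [AddCommGroup A] [One A] [CommHyperring A]

/-- The hyperoperation extended to subsets: `X∘Y = ⋃_{x∈X, y∈Y} x∘y`. -/
def sMul (X Y : Set A) : Set A := ⋃ x ∈ X, ⋃ y ∈ Y, hmul x y

/-- The product `x₁∘⋯∘xₙ` of the members of a list. -/
def hProd : List A → Set A
  | [] => {1}
  | [a] => {a}
  | a :: l => ⋃ c ∈ hProd l, hmul a c

/-- `xⁿ = x∘⋯∘x` (`n` factors). -/
def hPow (a : A) (n : ℕ) : Set A := hProd (List.replicate n a)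

/-- `a` is a unit if `1 ∈ a∘b` for some `b`. -/
def IsUnitH (a : A) : Prop := ∃ b : A, (1 : A) ∈ hmul a b

/-- A hyperideal of `A`. -/
def IsHyperideal (B : Set A) : Prop :=
  B.Nonempty ∧ (∀ x ∈ B, ∀ y ∈ B, x - y ∈ B) ∧ ∀ r : A, ∀ x ∈ B, hmul r x ⊆ B

def IsProperHyperideal (B : Set A) : Prop := IsHyperideal B ∧ B ≠ Set.univ

/-- A prime hyperideal. -/
def IsPrimeHyperideal (B : Set A) : Prop :=
  IsProperHyperideal B ∧ ∀ x y : A, hmul x y ⊆ B → x ∈ B ∨ y ∈ B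

/-- The prime radical: the intersection of all prime hyperideals containing `B`
(`= A` if there are none). -/
def radH (B : Set A) : Set A := ⋂₀ {P : Set A | IsPrimeHyperideal P ∧ B ⊆ P}

/-- A `𝒞`-hyperideal: meets a finite product `⇒` contains it. -/
def IsCHyperideal (B : Set A) : Prop :=
  IsHyperideal B ∧ ∀ l : List A, l ≠ [] → (hProd l ∩ B).Nonempty → hProd l ⊆ B

def setAdd (X Y : Set A) : Set A := Set.image2 (· + ·) X Y

/-- The sum `C₁ + ⋯ + Cₙ` of the finite products coded by a list of lists. -/
def sumProds (L : List (List A)) : Set A := L.foldr (fun l S => setAdd (hProd l) S) {0}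

/-- A strong `𝒞`-hyperideal: meets a finite sum of finite products `⇒` contains it. -/
def IsStrongCHyperideal (B : Set A) : Prop :=
  IsHyperideal B ∧ ∀ L : List (List A), L ≠ [] → (∀ l ∈ L, l ≠ []) →
    (sumProds L ∩ B).Nonempty → sumProds L ⊆ B

/-- A `v`-absorbing hyperideal. -/
def IsNAbsorbing (Q : Set A) (v : ℕ) : Prop :=
  IsProperHyperideal Q ∧ ∀ l : List A, l.length = v + 1 → hProd l ⊆ Q →
    ∃ l', l'.Sublist l ∧ l'.length = v ∧ hProd l' ⊆ Q

/-- A `(u,v)`-absorbing hyperideal. -/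
def IsUVAbsorbing (Q : Set A) (u v : ℕ) : Prop :=
  IsProperHyperideal Q ∧ ∀ l : List A, l.length = u → (∀ x ∈ l, ¬IsUnitH x) → hProd l ⊆ Q →
    ∃ l', l'.Sublist l ∧ l'.length = v ∧ hProd l' ⊆ Q

/-- An `AB`-`(u,v)`-absorbing hyperideal. -/
def IsABUVAbsorbing (Q : Set A) (u v : ℕ) : Prop :=
  IsProperHyperideal Q ∧ ∀ l : List A, l.length = u → hProd l ⊆ Q →
    ∃ l', l'.Sublist l ∧ l'.length = v ∧ hProd l' ⊆ Q

/-- A `(u,v)`-absorbing prime hyperideal. -/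
def IsUVAbsorbingPrime (Q : Set A) (u v : ℕ) : Prop :=
  IsProperHyperideal Q ∧ ∀ l : List A, l.length = u → (∀ x ∈ l, ¬IsUnitH x) → hProd l ⊆ Q →
    hProd (l.take v) ⊆ Q ∨ hProd (l.drop v) ⊆ Q

/-- A maximal hyperideal. -/
def IsMaximalHyperideal (M : Set A) : Prop :=
  IsProperHyperideal M ∧ ∀ B : Set A, IsHyperideal B → M ⊂ B → B = Set.univ

/-- `A` is local if it has exactly one maximal hyperideal. -/
def IsLocalH (A : Type*) [AddCommGroup A] [One A] [CommHyperring A] : Prop :=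
  ∃! M : Set A, IsMaximalHyperideal M

/-- `P` is a prime hyperideal minimal over `Q`. -/
def MinimalPrimeOver (Q P : Set A) : Prop :=
  IsPrimeHyperideal P ∧ Q ⊆ P ∧
    ∀ P' : Set A, IsPrimeHyperideal P' → Q ⊆ P' → P' ⊆ P → P' = P

/-- `Iⁿ = ⋃ {x₁∘⋯∘xₙ : xᵢ ∈ I}`. -/
def idealPow (I : Set A) (n : ℕ) : Set A :=
  ⋃ l ∈ {l : List A | l.length = n ∧ ∀ x ∈ l, x ∈ I}, hProd l

/-- `I₁∘⋯∘Iₙ = ⋃ {x₁∘⋯∘xₙ : xᵢ ∈ Iᵢ}`. -/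
def idealProd (L : List (Set A)) : Set A :=
  ⋃ l ∈ {l : List A | List.Forall₂ (· ∈ ·) l L}, hProd l

/-- `Abs(Q)`: the minimal `v` such that `Q` is `v`-absorbing. -/
noncomputable def AbsN (Q : Set A) : ℕ := sInf {v : ℕ | IsNAbsorbing Q v}

/-- `abs(Q)`: the minimal `v` such that `Q` is `(Abs(Q)+1, v)`-absorbing. -/
noncomputable def absN (Q : Set A) : ℕ := sInf {v : ℕ | IsUVAbsorbing Q (AbsN Q + 1) v}

/-- A primary hyperideal. -/
def IsPrimaryHyperideal (Q : Set A) : Prop :=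
  IsProperHyperideal Q ∧ ∀ x y : A, hmul x y ⊆ Q → x ∈ Q ∨ ∃ t : ℕ, 1 ≤ t ∧ hPow y t ⊆ Q

/-- `A` is a hyperfield if every nonzero element is a unit. -/
def IsHyperfield (A : Type*) [AddCommGroup A] [One A] [CommHyperring A] : Prop :=
  ∀ x : A, x ≠ 0 → IsUnitH x

/-- `(Q : x) = {a : a∘x ⊆ Q}`. -/
def colonH (Q : Set A) (x : A) : Set A := {a : A | hmul a x ⊆ Q}

/-- `J(A)`: the intersection of all maximal hyperideals of `A`. -/
def JacobsonH (A : Type*) [AddCommGroup A] [One A] [CommHyperring A] : Set A :=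
  ⋂₀ {M : Set A | IsMaximalHyperideal M}

section AuxDev
variable {A : Type*} [AddCommGroup A] [One A] [CommHyperring A]

lemma sMul_mono {X Y X' Y' : Set A} (hX : X ⊆ X') (hY : Y ⊆ Y') : sMul X Y ⊆ sMul X' Y' := by
  intro e he
  simp only [sMul, Set.mem_iUnion] at he ⊢
  obtain ⟨x, hx, y, hy, h⟩ := he
  exact ⟨x, hX hx, y, hY hy, h⟩

lemma sMul_comm' (X Y : Set A) : sMul X Y = sMul Y X := by
  ext e; simp only [sMul, Set.mem_iUnion]
  constructor <;> rintro ⟨x, hx, y, hy, h⟩ <;> exact ⟨y, hy, x, hx, by rwa [hmul_comm]⟩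

lemma sMul_assoc' (X Y Z : Set A) : sMul (sMul X Y) Z = sMul X (sMul Y Z) := by
  ext e
  simp only [sMul, Set.mem_iUnion]
  constructor
  · rintro ⟨b, ⟨x, hx, y, hy, hb⟩, z, hz, he⟩
    have h1 : e ∈ ⋃ b ∈ hmul x y, hmul b z := Set.mem_biUnion hb he
    rw [← hmul_assoc] at h1
    obtain ⟨a, ha, h⟩ := Set.mem_iUnion₂.1 h1
    exact ⟨x, hx, a, ⟨y, hy, z, hz, ha⟩, h⟩
  · rintro ⟨x, hx, a, ⟨y, hy, z, hz, ha⟩, he⟩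
    have h1 : e ∈ ⋃ a ∈ hmul y z, hmul x a := Set.mem_biUnion ha he
    rw [hmul_assoc] at h1
    obtain ⟨b, hb, h⟩ := Set.mem_iUnion₂.1 h1
    exact ⟨b, ⟨x, hx, y, hy, hb⟩, z, hz, h⟩

lemma hProd_nil' : hProd ([] : List A) = {1} := rfl
lemma hProd_singleton' (a : A) : hProd [a] = {a} := rfl

lemma hProd_cons (a : A) (l : List A) (hl : l ≠ []) :
    hProd (a :: l) = sMul {a} (hProd l) := by
  cases l with
  | nil => exact absurd rfl hl
  | cons b t =>
    show (⋃ c ∈ hProd (b :: t), hmul a c) = sMul {a} (hProd (b :: t))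
    simp [sMul]

lemma hProd_append {l₁ l₂ : List A} (h₁ : l₁ ≠ []) (h₂ : l₂ ≠ []) :
    hProd (l₁ ++ l₂) = sMul (hProd l₁) (hProd l₂) := by
  induction l₁ with
  | nil => exact absurd rfl h₁
  | cons a t ih =>
    cases t with
    | nil => simpa [hProd_singleton'] using hProd_cons a l₂ h₂
    | cons b t' =>
      rw [List.cons_append, hProd_cons a _ (by simp), hProd_cons a _ (by simp),
        ih (by simp), ← sMul_assoc']

lemma hmul_pair (w₁ w₂ : A) : hProd [w₁, w₂] = hmul w₁ w₂ := by
  show (⋃ c ∈ hProd [w₂], hmul w₁ c) = hmul w₁ w₂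
  simp [hProd_singleton']

lemma hProd_perm : ∀ {l l' : List A}, l.Perm l' → hProd l = hProd l' := by
  intro l l' h
  induction h with
  | nil => rfl
  | cons x h ih =>
    rename_i l₁ l₂
    cases l₁ with
    | nil => rw [h.symm.eq_nil]
    | cons a t =>
      have hne : l₂ ≠ [] := by
        intro e; subst e; exact absurd h.eq_nil (by simp)
      rw [hProd_cons _ _ (by simp), hProd_cons _ _ hne, ih]
  | swap x y l =>
    cases l with
    | nil => rw [hmul_pair, hmul_pair, hmul_comm]
    | cons a t =>
      rw [hProd_cons y (x::a::t) (by simp), hProd_cons x (a::t) (by simp),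
        hProd_cons x (y::a::t) (by simp), hProd_cons y (a::t) (by simp),
        ← sMul_assoc', ← sMul_assoc']
      rw [sMul_comm' ({y} : Set A) {x}]
  | trans _ _ ih₁ ih₂ => rw [ih₁, ih₂]

lemma hProd_nonempty (l : List A) : (hProd l).Nonempty := by
  induction l with
  | nil => exact ⟨1, rfl⟩
  | cons a t ih =>
    cases t with
    | nil => exact ⟨a, rfl⟩
    | cons b t' =>
      obtain ⟨c, hc⟩ := ih
      obtain ⟨e, he⟩ := hmul_nonempty a c
      exact ⟨e, Set.mem_biUnion hc he⟩

lemma hProd_cons_subset {c : A} {l : List A} (r : List A) (hl : l ≠ []) (hc : c ∈ hProd l) :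
    hProd (c :: r) ⊆ hProd (l ++ r) := by
  cases r with
  | nil => rw [List.append_nil]; simpa [hProd_singleton'] using hc
  | cons b t =>
    rw [hProd_cons c _ (by simp), hProd_append hl (by simp)]
    exact sMul_mono (Set.singleton_subset_iff.2 hc) (le_refl _)

lemma hmul_mem_subset {w₁ w₂ : A} {l₁ l₂ : List A} (h₁ : l₁ ≠ []) (h₂ : l₂ ≠ [])
    (hw₁ : w₁ ∈ hProd l₁) (hw₂ : w₂ ∈ hProd l₂) : hmul w₁ w₂ ⊆ hProd (l₁ ++ l₂) := by
  rw [← hmul_pair]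
  refine (hProd_cons_subset [w₂] h₁ hw₁).trans ?_
  have p : (l₁ ++ [w₂]).Perm (w₂ :: l₁) := by
    simpa using (List.perm_append_comm (l₁ := l₁) (l₂ := [w₂]))
  rw [hProd_perm p]
  refine (hProd_cons_subset l₁ h₂ hw₂).trans ?_
  rw [hProd_perm (List.perm_append_comm)]

end AuxDev

section AuxDev2
variable {A : Type*} [AddCommGroup A] [One A] [CommHyperring A]

lemma IsHyperideal.zero_mem' {B : Set A} (hB : IsHyperideal B) : (0:A) ∈ B := by
  obtain ⟨x, hx⟩ := hB.1; simpa using hB.2.1 x hx x hx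

lemma IsHyperideal.neg_mem' {B : Set A} (hB : IsHyperideal B) {x : A} (hx : x ∈ B) :
    -x ∈ B := by simpa using hB.2.1 0 hB.zero_mem' x hx

lemma IsHyperideal.add_mem' {B : Set A} (hB : IsHyperideal B) {x y : A} (hx : x ∈ B)
    (hy : y ∈ B) : x + y ∈ B := by
  simpa [sub_neg_eq_add] using hB.2.1 x hx (-y) (hB.neg_mem' hy)

lemma IsHyperideal.sub_mem' {B : Set A} (hB : IsHyperideal B) {x y : A} (hx : x ∈ B)
    (hy : y ∈ B) : x - y ∈ B := hB.2.1 x hx y hy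

lemma hProd_subset_of_mem {B : Set A} (hB : IsHyperideal B) {l : List A} {e : A}
    (hel : e ∈ l) (heB : e ∈ B) : hProd l ⊆ B := by
  induction l with
  | nil => simp at hel
  | cons a t ih =>
    cases t with
    | nil =>
      simp only [List.mem_singleton] at hel
      subst hel
      simpa [hProd_singleton'] using heB
    | cons b t' =>
      intro w hw
      obtain ⟨c, hc, hw⟩ := Set.mem_iUnion₂.1 (show w ∈ ⋃ c ∈ hProd (b::t'), hmul a c from hw)
      rcases List.mem_cons.1 hel with rfl | het
      · exact hB.2.2 c e heB (hmul_comm e c ▸ hw)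
      · exact hB.2.2 a c (ih het hc) hw

lemma exists_mem_of_hProd_subset_prime {B : Set A} (hPB : IsPrimeHyperideal B) :
    ∀ {l : List A}, l ≠ [] → hProd l ⊆ B → ∃ e ∈ l, e ∈ B := by
  intro l
  induction l with
  | nil => simp
  | cons a t ih =>
    intro _ hsub
    cases t with
    | nil => exact ⟨a, by simp, hsub rfl⟩
    | cons b t' =>
      by_cases haB : a ∈ B
      · exact ⟨a, by simp, haB⟩
      · have ht : hProd (b::t') ⊆ B := by
          intro c hc
          have hm : hmul a c ⊆ B := fun w hw => hsub (Set.mem_biUnion hc hw)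
          rcases hPB.2 a c hm with h | h
          · exact absurd h haB
          · exact h
        obtain ⟨e, he, heB⟩ := ih (by simp) ht
        exact ⟨e, by simp [he], heB⟩

lemma one_not_mem_of_proper {B : Set A} (hB : IsProperHyperideal B) : (1:A) ∉ B :=
  fun h => hB.2 (Set.eq_univ_of_forall fun r => hB.1.2.2 r 1 h (one_mem r))

lemma not_unit_of_mem_proper {B : Set A} (hB : IsProperHyperideal B) {x : A} (hx : x ∈ B) :
    ¬ IsUnitH x := by
  rintro ⟨b, hb⟩
  exact one_not_mem_of_proper hB (hB.1.2.2 b x hx (hmul_comm x b ▸ hb))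

lemma IsStrongCHyperideal.toC {Q : Set A} (h : IsStrongCHyperideal Q) : IsCHyperideal Q := by
  refine ⟨h.1, fun l hl hne => ?_⟩
  have e : sumProds [l] = hProd l := by
    show setAdd (hProd l) (sumProds ([] : List (List A))) = hProd l
    have : sumProds ([] : List (List A)) = {0} := rfl
    rw [this]
    ext w
    simp [setAdd]
  have := h.2 [l] (by simp) (by simpa using hl) (by rwa [e])
  rwa [e] at this

lemma replicate_ne_nil' (t : A) {n : ℕ} (hn : 1 ≤ n) : List.replicate n t ≠ [] := by
  intro h
  have := congrArg List.length h
  simp at this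
  omega

lemma hPow_one' (t : A) : hPow t 1 = {t} := rfl

lemma hPow_add' (t : A) {m n : ℕ} (hm : 1 ≤ m) (hn : 1 ≤ n) :
    hPow t (m + n) = sMul (hPow t m) (hPow t n) := by
  unfold hPow
  rw [List.replicate_add, hProd_append (replicate_ne_nil' t hm) (replicate_ne_nil' t hn)]

lemma hPow_nonempty (t : A) (n : ℕ) : (hPow t n).Nonempty := hProd_nonempty _

lemma hPow_subset_of_le {Q : Set A} (hQ : IsHyperideal Q) {t : A} {n : ℕ} (hn : 1 ≤ n)
    (h : hPow t n ⊆ Q) {m : ℕ} (hm : n ≤ m) : hPow t m ⊆ Q := by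
  obtain ⟨k, rfl⟩ := Nat.exists_eq_add_of_le hm
  rcases Nat.eq_zero_or_pos k with rfl | hk
  · simpa using h
  · rw [hPow_add' t hn hk]
    intro w hw
    simp only [sMul, Set.mem_iUnion] at hw
    obtain ⟨x, hx, y, hy, hw⟩ := hw
    exact hQ.2.2 y x (h hx) (hmul_comm x y ▸ hw)

lemma hPow_mul_subset {t : A} {n₁ n₂ : ℕ} (h₁ : 1 ≤ n₁) (h₂ : 1 ≤ n₂) {w₁ w₂ : A}
    (hw₁ : w₁ ∈ hPow t n₁) (hw₂ : w₂ ∈ hPow t n₂) : hmul w₁ w₂ ⊆ hPow t (n₁ + n₂) := by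
  unfold hPow at *
  rw [List.replicate_add]
  exact hmul_mem_subset (replicate_ne_nil' t h₁) (replicate_ne_nil' t h₂) hw₁ hw₂

lemma hPow_subset_prod_repeat {t : A} {l : List A} (hl : l ≠ []) (ht : t ∈ hProd l) :
    ∀ {n : ℕ}, 1 ≤ n → hPow t n ⊆ hProd (List.flatten (List.replicate n l)) := by
  intro n
  induction n with
  | zero => omega
  | succ k ih =>
    intro _
    rcases Nat.eq_zero_or_pos k with rfl | hk
    · simpa [hPow_one'] using ht
    · have e1 : List.replicate (k+1) l = l :: List.replicate k l := rfl
      rw [e1, List.flatten_cons]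
      have hkl : List.flatten (List.replicate k l) ≠ [] := by
        cases k with
        | zero => omega
        | succ k' =>
          show (l ++ List.flatten (List.replicate k' l)) ≠ []
          simp [hl]
      have e2 : (k : ℕ) + 1 = 1 + k := by omega
      rw [e2, hPow_add' t le_rfl hk, hProd_append hl hkl]
      exact sMul_mono (by simpa [hPow_one'] using ht) (ih hk)
end AuxDev2

section AuxDev3
variable {A : Type*} [AddCommGroup A] [One A] [CommHyperring A]

/-- Membership in the set of finite sums of products `r∘a`. -/
inductive InIGen (a : A) : A → Prop
  | zero : InIGen a 0
  | step : ∀ (r c s : A), c ∈ hmul r a → InIGen a s → InIGen a (c + s)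

lemma InIGen.add' {a : A} {s t : A} (hs : InIGen a s) (ht : InIGen a t) :
    InIGen a (s + t) := by
  induction hs with
  | zero => simpa using ht
  | step r c s' hc _ ih => rw [add_assoc]; exact InIGen.step r c _ hc ih

lemma InIGen.neg' {a : A} {s : A} (hs : InIGen a s) : InIGen a (-s) := by
  induction hs with
  | zero => simpa using InIGen.zero
  | step r c s' hc _ ih =>
    rw [neg_add]
    have hc' : -c ∈ hmul (-r) a := by rw [neg_hmul]; exact ⟨c, hc, rfl⟩
    exact InIGen.step _ _ _ hc' ih

lemma mem_IGen_self (a : A) : InIGen a a := by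
  have h1 : a ∈ hmul 1 a := hmul_comm a 1 ▸ one_mem a
  simpa using InIGen.step 1 a 0 h1 InIGen.zero

def MgenSet (M : Set A) (a : A) : Set A := {w | ∃ m ∈ M, ∃ s, InIGen a s ∧ w = m + s}

lemma subset_MgenSet {M : Set A} (a : A) : M ⊆ MgenSet M a :=
  fun m hm => ⟨m, hm, 0, InIGen.zero, (add_zero m).symm⟩

lemma mem_MgenSet_self {M : Set A} (hM : IsHyperideal M) (a : A) : a ∈ MgenSet M a :=
  ⟨0, hM.zero_mem', a, mem_IGen_self a, (zero_add a).symm⟩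

lemma hmul_IGen {M : Set A} (hM : IsHyperideal M) {a : A} {s : A} (hs : InIGen a s) (r : A) :
    hmul r s ⊆ MgenSet M a := by
  induction hs with
  | zero =>
    intro e he
    exact subset_MgenSet a (hM.2.2 r 0 hM.zero_mem' he)
  | step r' c s' hc hst ih =>
    intro e he
    obtain ⟨f, hf, g, hg, rfl⟩ := hmul_add r c s' he
    have hf2 : f ∈ hProd ([r] ++ [r', a]) :=
      hmul_mem_subset (by simp) (by simp) rfl (by rwa [hmul_pair]) hf
    rw [show ([r] ++ [r', a] : List A) = [r, r'] ++ [a] from rfl,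
      hProd_append (by simp) (by simp), hmul_pair] at hf2
    simp only [sMul, Set.mem_iUnion, hProd_singleton'] at hf2
    obtain ⟨d, hd, y, hy, hf3⟩ := hf2
    rcases hy with rfl
    obtain ⟨m, hm, s'', hs'', rfl⟩ := ih hg
    exact ⟨m, hm, f + s'', InIGen.step _ _ _ hf3 hs'', by abel⟩

lemma MgenSet_hyperideal {M : Set A} (hM : IsHyperideal M) (a : A) :
    IsHyperideal (MgenSet M a) := by
  refine ⟨⟨0, subset_MgenSet a hM.zero_mem'⟩, ?_, ?_⟩
  · rintro x ⟨m, hm, s, hs, rfl⟩ y ⟨m', hm', s', hs', rfl⟩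
    exact ⟨m - m', hM.sub_mem' hm hm', s - s',
      by simpa [sub_eq_add_neg] using hs.add' hs'.neg', by abel⟩
  · rintro r x ⟨m, hm, s, hs, rfl⟩
    intro e he
    obtain ⟨f, hf, g, hg, rfl⟩ := hmul_add r m s he
    obtain ⟨m', hm', s'', hs'', rfl⟩ := hmul_IGen hM hs r hg
    exact ⟨f + m', hM.add_mem' (hM.2.2 r m hm hf) hm', s'', hs'', by abel⟩

lemma key3 {M : Set A} (hM : IsHyperideal M) {a b c d r r' : A} (hab : hmul a b ⊆ M)
    (hc : c ∈ hmul r a) (hd : d ∈ hmul r' b) : hmul c d ⊆ M := by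
  have h1 : hmul c d ⊆ hProd ([r, a] ++ [r', b]) :=
    hmul_mem_subset (by simp) (by simp) (by rwa [hmul_pair]) (by rwa [hmul_pair])
  have hperm : ([r, a] ++ [r', b] : List A).Perm ([r, r'] ++ [a, b]) := by
    refine List.Perm.cons r ?_
    exact List.Perm.swap r' a [b]
  intro e he
  have h2 := h1 he
  rw [hProd_perm hperm, hProd_append (by simp) (by simp), hmul_pair, hmul_pair] at h2
  simp only [sMul, Set.mem_iUnion] at h2
  obtain ⟨x, hx, y, hy, he2⟩ := h2
  exact hM.2.2 x y (hab hy) he2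

lemma key2 {M : Set A} (hM : IsHyperideal M) {a b c r : A} (hab : hmul a b ⊆ M)
    (hc : c ∈ hmul r a) {s : A} (hs : InIGen b s) : hmul c s ⊆ M := by
  induction hs with
  | zero => intro e he; exact hM.2.2 c 0 hM.zero_mem' he
  | step r' d s' hd _ ih =>
    intro e he
    obtain ⟨f, hf, g, hg, rfl⟩ := hmul_add c d s' he
    exact hM.add_mem' (key3 hM hab hc hd hf) (ih hg)

lemma key1 {M : Set A} (hM : IsHyperideal M) {a b : A} (hab : hmul a b ⊆ M)
    {s₁ s₂ : A} (h₁ : InIGen a s₁) (h₂ : InIGen b s₂) : hmul s₁ s₂ ⊆ M := by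
  induction h₁ with
  | zero => intro e he; rw [hmul_comm] at he; exact hM.2.2 s₂ 0 hM.zero_mem' he
  | step r c s hc _ ih =>
    intro e he
    rw [hmul_comm] at he
    obtain ⟨f, hf, g, hg, rfl⟩ := hmul_add s₂ c s he
    exact hM.add_mem' (key2 hM hab hc h₂ (hmul_comm s₂ c ▸ hf)) (ih (hmul_comm s₂ s ▸ hg))

lemma keymul {M : Set A} (hM : IsHyperideal M) {a b : A} (hab : hmul a b ⊆ M)
    {w₁ w₂ : A} (h₁ : w₁ ∈ MgenSet M a) (h₂ : w₂ ∈ MgenSet M b) : hmul w₁ w₂ ⊆ M := by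
  obtain ⟨m₁, hm₁, s₁, hs₁, rfl⟩ := h₁
  obtain ⟨m₂, hm₂, s₂, hs₂, rfl⟩ := h₂
  intro e he
  obtain ⟨f, hf, g, hg, rfl⟩ := hmul_add (m₁ + s₁) m₂ s₂ he
  refine hM.add_mem' (hM.2.2 _ _ hm₂ hf) ?_
  rw [hmul_comm] at hg
  obtain ⟨f', hf', g', hg', rfl⟩ := hmul_add s₂ m₁ s₁ hg
  exact hM.add_mem' (hM.2.2 _ _ hm₁ hf')
    (key1 hM hab hs₁ hs₂ (hmul_comm s₂ s₁ ▸ hg'))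

lemma exists_prime_avoiding {Q : Set A} (hQ : IsHyperideal Q) (S : Set (Set A))
    (hSne : ∃ s ∈ S, s.Nonempty)
    (hmulcl : ∀ s₁ ∈ S, ∀ s₂ ∈ S, ∀ w₁ ∈ s₁, ∀ w₂ ∈ s₂, ∃ s₃ ∈ S, hmul w₁ w₂ ⊆ s₃)
    (havoid : ∀ s ∈ S, s ∩ Q = ∅) :
    ∃ M : Set A, IsPrimeHyperideal M ∧ Q ⊆ M ∧ ∀ s ∈ S, s ∩ M = ∅ := by
  have hzorn : ∀ c ⊆ {B : Set A | IsHyperideal B ∧ Q ⊆ B ∧ ∀ s ∈ S, s ∩ B = ∅},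
      IsChain (· ⊆ ·) c → c.Nonempty →
      ∃ ub ∈ {B : Set A | IsHyperideal B ∧ Q ⊆ B ∧ ∀ s ∈ S, s ∩ B = ∅},
        ∀ b ∈ c, b ⊆ ub := by
    intro c hcF hchain ⟨B₀, hB₀⟩
    refine ⟨⋃₀ c, ⟨⟨?_, ?_, ?_⟩, ?_, ?_⟩, fun b hb => Set.subset_sUnion_of_mem hb⟩
    · obtain ⟨x, hx⟩ := (hcF hB₀).1.1
      exact ⟨x, Set.mem_sUnion.2 ⟨B₀, hB₀, hx⟩⟩
    · rintro x ⟨B₁, hB₁, hx⟩ y ⟨B₂, hB₂, hy⟩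
      rcases hchain.total hB₁ hB₂ with h | h
      · exact ⟨B₂, hB₂, (hcF hB₂).1.2.1 x (h hx) y hy⟩
      · exact ⟨B₁, hB₁, (hcF hB₁).1.2.1 x hx y (h hy)⟩
    · rintro r x ⟨B₁, hB₁, hx⟩ e he
      exact ⟨B₁, hB₁, (hcF hB₁).1.2.2 r x hx he⟩
    · exact ((hcF hB₀).2.1).trans (Set.subset_sUnion_of_mem hB₀)
    · intro s hs
      rw [Set.eq_empty_iff_forall_notMem]
      rintro w ⟨hws, B₁, hB₁, hwB₁⟩
      have := (hcF hB₁).2.2 s hs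
      rw [Set.eq_empty_iff_forall_notMem] at this
      exact this w ⟨hws, hwB₁⟩
  obtain ⟨M, hQM0, hmaxM⟩ := zorn_subset_nonempty _ hzorn Q ⟨hQ, subset_rfl, havoid⟩
  obtain ⟨hMideal, hQM', havoidM⟩ := hmaxM.prop
  have hmax : ∀ a ∈ {B : Set A | IsHyperideal B ∧ Q ⊆ B ∧ ∀ s ∈ S, s ∩ B = ∅},
      M ⊆ a → a = M := fun a ha hsub => subset_antisymm (hmaxM.2 ha hsub) hsub
  have hproper : M ≠ Set.univ := by
    obtain ⟨s, hs, w, hw⟩ := hSne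
    intro h
    have := havoidM s hs
    rw [Set.eq_empty_iff_forall_notMem] at this
    exact this w ⟨hw, h ▸ Set.mem_univ w⟩
  refine ⟨M, ⟨⟨hMideal, hproper⟩, ?_⟩, hQM', havoidM⟩
  intro x y hxy
  by_contra hcon
  push_neg at hcon
  obtain ⟨hx, hy⟩ := hcon
  have hMx : MgenSet M x ∉ {B : Set A | IsHyperideal B ∧ Q ⊆ B ∧ ∀ s ∈ S, s ∩ B = ∅} := by
    intro hmem
    have := hmax _ hmem (subset_MgenSet x)
    exact hx (this ▸ mem_MgenSet_self hMideal x)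
  have hMy : MgenSet M y ∉ {B : Set A | IsHyperideal B ∧ Q ⊆ B ∧ ∀ s ∈ S, s ∩ B = ∅} := by
    intro hmem
    have := hmax _ hmem (subset_MgenSet y)
    exact hy (this ▸ mem_MgenSet_self hMideal y)
  have hx' : ∃ s₁ ∈ S, (s₁ ∩ MgenSet M x).Nonempty := by
    by_contra hc
    push_neg at hc
    exact hMx ⟨MgenSet_hyperideal hMideal x, hQM'.trans (subset_MgenSet x),
      fun s hs => hc s hs⟩
  have hy' : ∃ s₂ ∈ S, (s₂ ∩ MgenSet M y).Nonempty := by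
    by_contra hc
    push_neg at hc
    exact hMy ⟨MgenSet_hyperideal hMideal y, hQM'.trans (subset_MgenSet y),
      fun s hs => hc s hs⟩
  obtain ⟨s₁, hs₁, w₁, hw₁s, hw₁⟩ := hx'
  obtain ⟨s₂, hs₂, w₂, hw₂s, hw₂⟩ := hy'
  obtain ⟨s₃, hs₃, hsub⟩ := hmulcl s₁ hs₁ s₂ hs₂ w₁ hw₁s w₂ hw₂s
  obtain ⟨e, he⟩ := hmul_nonempty w₁ w₂
  have heM : e ∈ M := keymul hMideal hxy hw₁ hw₂ he
  have := havoidM s₃ hs₃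
  rw [Set.eq_empty_iff_forall_notMem] at this
  exact this e ⟨hsub he, heM⟩

lemma exists_minimalPrime {Q M₀ : Set A} (hQ : IsHyperideal Q) (hM₀ : IsPrimeHyperideal M₀)
    (hQM₀ : Q ⊆ M₀) : ∃ N, MinimalPrimeOver Q N ∧ N ⊆ M₀ := by
  have hzorn : ∀ c ⊆ {N : Set A | IsPrimeHyperideal N ∧ Q ⊆ N ∧ N ⊆ M₀},
      IsChain (· ⊆ ·) c → c.Nonempty →
      ∃ lb ∈ {N : Set A | IsPrimeHyperideal N ∧ Q ⊆ N ∧ N ⊆ M₀}, ∀ b ∈ c, lb ⊆ b := by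
    intro c hcG hchain ⟨B₀, hB₀⟩
    refine ⟨⋂₀ c, ⟨⟨⟨⟨?_, ?_, ?_⟩, ?_⟩, ?_⟩, ?_, ?_⟩, fun b hb => Set.sInter_subset_of_mem hb⟩
    · obtain ⟨q, hq⟩ := hQ.1
      exact ⟨q, fun B hB => (hcG hB).2.1 hq⟩
    · intro x hx y hy B hB
      exact (hcG hB).1.1.1.2.1 x (hx B hB) y (hy B hB)
    · intro r x hx e he B hB
      exact (hcG hB).1.1.1.2.2 r x (hx B hB) he
    · intro h
      refine (hcG hB₀).1.1.2 (Set.eq_univ_of_forall fun w => ?_)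
      exact (h ▸ Set.mem_univ w : w ∈ ⋂₀ c) B₀ hB₀
    · intro x y hxy
      by_contra hcon
      push_neg at hcon
      obtain ⟨hx, hy⟩ := hcon
      simp only [Set.mem_sInter, not_forall] at hx hy
      obtain ⟨N₁, hN₁, hxN₁⟩ := hx
      obtain ⟨N₂, hN₂, hyN₂⟩ := hy
      rcases hchain.total hN₁ hN₂ with h | h
      · rcases (hcG hN₁).1.2 x y ((Set.sInter_subset_of_mem hN₁).trans' hxy) with hh | hh
        · exact hxN₁ hh
        · exact hyN₂ (h hh)
      · rcases (hcG hN₂).1.2 x y ((Set.sInter_subset_of_mem hN₂).trans' hxy) with hh | hh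
        · exact hxN₁ (h hh)
        · exact hyN₂ hh
    · intro q hq B hB
      exact (hcG hB).2.1 hq
    · exact (Set.sInter_subset_of_mem hB₀).trans (hcG hB₀).2.2
  obtain ⟨N, hNM₀, hminN⟩ := zorn_superset_nonempty _ hzorn M₀ ⟨hM₀, hQM₀, subset_rfl⟩
  obtain ⟨hNG1, hNG2, hNG3⟩ := hminN.prop
  refine ⟨N, ⟨hNG1, hNG2, ?_⟩, hNG3⟩
  intro P' hP' hQP' hP'N
  exact subset_antisymm hP'N (hminN.2 ⟨hP', hQP', hP'N.trans hNG3⟩ hP'N)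

end AuxDev3

section AuxDev4
variable {A : Type*} [AddCommGroup A] [One A] [CommHyperring A]

lemma exists_T_list {Q N : Set A} (hQC : IsCHyperideal Q) (hmin : MinimalPrimeOver Q N)
    {x₀ : A} (hx₀ : x₀ ∈ N) :
    ∃ l : List A, l ≠ [] ∧ (∀ e ∈ l, e ∉ N ∨ e = x₀) ∧ hProd l ⊆ Q := by
  by_contra hcon
  push_neg at hcon
  have havoid : ∀ s ∈ {s | ∃ l : List A, l ≠ [] ∧ (∀ e ∈ l, e ∉ N ∨ e = x₀) ∧ s = hProd l},
      s ∩ Q = ∅ := by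
    rintro s ⟨l, hl, hprop, rfl⟩
    by_contra he
    exact hcon l hl hprop (hQC.2 l hl (Set.nonempty_iff_ne_empty.2 he))
  have hSne : ∃ s ∈ {s | ∃ l : List A, l ≠ [] ∧ (∀ e ∈ l, e ∉ N ∨ e = x₀) ∧ s = hProd l},
      s.Nonempty :=
    ⟨hProd [x₀], ⟨[x₀], by simp, by simp, rfl⟩, hProd_nonempty _⟩
  have hmulcl : ∀ s₁ ∈ {s | ∃ l : List A, l ≠ [] ∧ (∀ e ∈ l, e ∉ N ∨ e = x₀) ∧ s = hProd l},
      ∀ s₂ ∈ {s | ∃ l : List A, l ≠ [] ∧ (∀ e ∈ l, e ∉ N ∨ e = x₀) ∧ s = hProd l},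
      ∀ w₁ ∈ s₁, ∀ w₂ ∈ s₂,
      ∃ s₃ ∈ {s | ∃ l : List A, l ≠ [] ∧ (∀ e ∈ l, e ∉ N ∨ e = x₀) ∧ s = hProd l},
        hmul w₁ w₂ ⊆ s₃ := by
    rintro s₁ ⟨l₁, hl₁, hp₁, rfl⟩ s₂ ⟨l₂, hl₂, hp₂, rfl⟩ w₁ hw₁ w₂ hw₂
    refine ⟨hProd (l₁ ++ l₂), ⟨l₁ ++ l₂, by simp [hl₁], ?_, rfl⟩,
      hmul_mem_subset hl₁ hl₂ hw₁ hw₂⟩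
    intro e he
    rcases List.mem_append.1 he with h | h
    · exact hp₁ e h
    · exact hp₂ e h
  obtain ⟨M, hMprime, hQM, hMavoid⟩ :=
    exists_prime_avoiding hQC.1 _ hSne hmulcl havoid
  have hMN : M ⊆ N := by
    intro s hsM
    by_contra hsN
    have hmem : hProd [s] ∈ {s | ∃ l : List A, l ≠ [] ∧ (∀ e ∈ l, e ∉ N ∨ e = x₀) ∧
        s = hProd l} := ⟨[s], by simp, by simpa using Or.inl hsN, rfl⟩
    have := hMavoid _ hmem
    rw [Set.eq_empty_iff_forall_notMem] at this
    exact this s ⟨rfl, hsM⟩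
  have heq := hmin.2.2 M hMprime hQM hMN
  have hmem : hProd [x₀] ∈ {s | ∃ l : List A, l ≠ [] ∧ (∀ e ∈ l, e ∉ N ∨ e = x₀) ∧
      s = hProd l} := ⟨[x₀], by simp, by simp, rfl⟩
  have := hMavoid _ hmem
  rw [Set.eq_empty_iff_forall_notMem] at this
  exact this x₀ ⟨rfl, heq ▸ hx₀⟩

lemma flatten_subst [DecidableEq A] {x₀ : A} {l : List A} (hl : l ≠ []) (hx₀ : x₀ ∈ hProd l) :
    ∀ {l' : List A}, l' ≠ [] →
      hProd l' ⊆ hProd ((l'.map (fun e => if e = x₀ then l else [e])).flatten) ∧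
      (l'.map (fun e => if e = x₀ then l else [e])).flatten ≠ [] := by
  intro l'
  induction l' with
  | nil => exact fun h => absurd rfl h
  | cons e t ih =>
    intro _
    have hfe : hProd [e] ⊆ hProd (if e = x₀ then l else [e]) := by
      split
      · next h => subst h; simpa [hProd_singleton'] using hx₀
      · exact subset_rfl
    have hfene : (if e = x₀ then l else [e]) ≠ [] := by
      split
      · exact hl
      · simp
    cases t with
    | nil =>
      constructor
      · simpa using hfe
      · simpa using hfene
    | cons b t' =>
      obtain ⟨ihsub, ihne⟩ := ih (by simp)
      have hflat : ((e :: b :: t').map (fun e => if e = x₀ then l else [e])).flatten =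
          (if e = x₀ then l else [e]) ++
            ((b :: t').map (fun e => if e = x₀ then l else [e])).flatten := by
        simp
      rw [hflat]
      refine ⟨?_, by simp [hfene]⟩
      rw [hProd_cons e _ (by simp), hProd_append hfene ihne]
      refine (sMul_mono ?_ ihsub)
      simpa [hProd_singleton'] using hfe

lemma minimalPrime_isC {Q N : Set A} (hQC : IsCHyperideal Q) (hmin : MinimalPrimeOver Q N) :
    IsCHyperideal N := by
  classical
  refine ⟨hmin.1.1.1, ?_⟩
  intro l hl hne
  obtain ⟨x₀, hx₀l, hx₀N⟩ := hne
  by_cases hex : ∃ e ∈ l, e ∈ N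
  · obtain ⟨e, hel, heN⟩ := hex
    exact hProd_subset_of_mem hmin.1.1.1 hel heN
  · push_neg at hex
    exfalso
    obtain ⟨l', hl', hp', hsub'⟩ := exists_T_list hQC hmin hx₀N
    obtain ⟨hsub'', hne''⟩ := flatten_subst hl hx₀l hl'
    have h1 : (hProd ((l'.map (fun e => if e = x₀ then l else [e])).flatten) ∩ Q).Nonempty := by
      obtain ⟨w, hw⟩ := hProd_nonempty l'
      exact ⟨w, hsub'' hw, hsub' hw⟩
    have h2 : hProd ((l'.map (fun e => if e = x₀ then l else [e])).flatten) ⊆ N :=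
      (hQC.2 _ hne'' h1).trans hmin.2.1
    obtain ⟨e, hel'', heN⟩ := exists_mem_of_hProd_subset_prime hmin.1 hne'' h2
    rw [List.mem_flatten] at hel''
    obtain ⟨L, hL, heL⟩ := hel''
    obtain ⟨e', he'l', rfl⟩ := List.mem_map.1 hL
    by_cases he' : e' = x₀
    · rw [if_pos he'] at heL
      exact hex e heL heN
    · rw [if_neg he'] at heL
      simp only [List.mem_singleton] at heL
      subst heL
      rcases hp' e he'l' with h | h
      · exact h heN
      · exact he' h

lemma mem_rad_of_mem_all {Q : Set A} {v : ℕ} {P : Fin v → Set A}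
    (hQC : IsCHyperideal Q)
    (honly : ∀ P' : Set A, IsCHyperideal P' → MinimalPrimeOver Q P' → ∃ i, P' = P i)
    {t : A} (ht : ∀ i, t ∈ P i) :
    ∃ n, 1 ≤ n ∧ hPow t n ⊆ Q := by
  by_contra hcon
  push_neg at hcon
  have havoid : ∀ s ∈ {s | ∃ n, 1 ≤ n ∧ s = hPow t n}, s ∩ Q = ∅ := by
    rintro s ⟨n, hn, rfl⟩
    by_contra he
    exact hcon n hn (hQC.2 (List.replicate n t) (replicate_ne_nil' t hn)
      (Set.nonempty_iff_ne_empty.2 he))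
  have hSne : ∃ s ∈ {s | ∃ n, 1 ≤ n ∧ s = hPow t n}, s.Nonempty :=
    ⟨hPow t 1, ⟨1, le_rfl, rfl⟩, hPow_nonempty t 1⟩
  have hmulcl : ∀ s₁ ∈ {s | ∃ n, 1 ≤ n ∧ s = hPow t n},
      ∀ s₂ ∈ {s | ∃ n, 1 ≤ n ∧ s = hPow t n}, ∀ w₁ ∈ s₁, ∀ w₂ ∈ s₂,
      ∃ s₃ ∈ {s | ∃ n, 1 ≤ n ∧ s = hPow t n}, hmul w₁ w₂ ⊆ s₃ := by
    rintro s₁ ⟨n₁, hn₁, rfl⟩ s₂ ⟨n₂, hn₂, rfl⟩ w₁ hw₁ w₂ hw₂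
    exact ⟨hPow t (n₁ + n₂), ⟨n₁ + n₂, by omega, rfl⟩, hPow_mul_subset hn₁ hn₂ hw₁ hw₂⟩
  obtain ⟨M, hMprime, hQM, hMavoid⟩ := exists_prime_avoiding hQC.1 _ hSne hmulcl havoid
  have htM : t ∉ M := by
    intro h
    have := hMavoid (hPow t 1) ⟨1, le_rfl, rfl⟩
    rw [Set.eq_empty_iff_forall_notMem] at this
    exact this t ⟨rfl, h⟩
  obtain ⟨N, hNmin, hNM⟩ := exists_minimalPrime hQC.1 hMprime hQM
  obtain ⟨i, hi⟩ := honly N (minimalPrime_isC hQC hNmin) hNmin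
  exact htM (hNM (hi ▸ ht i))

end AuxDev4

section AuxDev5
variable {A : Type*} [AddCommGroup A] [One A] [CommHyperring A]

lemma sublist_extend {α : Type*} : ∀ {s L : List α}, s.Sublist L → ∀ {n : ℕ},
    s.length ≤ n → n ≤ L.length → ∃ m, s.Sublist m ∧ m.Sublist L ∧ m.length = n := by
  intro s L hs
  induction hs with
  | slnil =>
    intro n h1 h2
    simp only [List.length_nil, Nat.le_zero] at h2
    exact ⟨[], List.Sublist.refl _, List.Sublist.refl _, by simp [h2]⟩
  | cons a h ih =>
    rename_i l₁ l₂
    intro n h1 h2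
    by_cases hn : n ≤ l₂.length
    · obtain ⟨m, hm1, hm2, hm3⟩ := ih h1 hn
      exact ⟨m, hm1, hm2.cons a, hm3⟩
    · have hlen := h.length_le
      simp only [List.length_cons] at h2
      obtain ⟨m, hm1, hm2, hm3⟩ := ih (n := n - 1) (by omega) (by omega)
      exact ⟨a :: m, hm1.cons a, hm2.cons₂ a, by simp [hm3]; omega⟩
  | cons_cons a h ih =>
    rename_i l₁ l₂
    intro n h1 h2
    simp only [List.length_cons] at h1 h2
    obtain ⟨m, hm1, hm2, hm3⟩ := ih (n := n - 1) (by omega) (by omega)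
    exact ⟨a :: m, hm1.cons₂ a, hm2.cons₂ a, by simp [hm3]; omega⟩

lemma hProd_append_subset {Q : Set A} (hQ : IsHyperideal Q) {l : List A} (hl : l ≠ [])
    (hsub : hProd l ⊆ Q) (w : List A) : hProd (l ++ w) ⊆ Q := by
  cases w with
  | nil => simpa using hsub
  | cons b t =>
    rw [hProd_append hl (by simp)]
    intro e he
    simp only [sMul, Set.mem_iUnion] at he
    obtain ⟨x, hx, y, hy, he⟩ := he
    exact hQ.2.2 y x (hsub hx) (hmul_comm x y ▸ he)

lemma nonunit_of_mem_hmul {a b c₀ : A} (ha : ¬IsUnitH a) (hc₀ : c₀ ∈ hmul a b) :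
    ¬IsUnitH c₀ := by
  rintro ⟨e, he⟩
  have h1 : hmul c₀ e ⊆ hProd ([a, b] ++ [e]) :=
    hmul_mem_subset (by simp) (by simp) (by rwa [hmul_pair]) rfl
  have h2 : (1 : A) ∈ hProd [a, b, e] := h1 he
  obtain ⟨c, hc, h3⟩ := Set.mem_iUnion₂.1 (show (1:A) ∈ ⋃ c ∈ hProd [b, e], hmul a c from h2)
  exact ha ⟨c, h3⟩

lemma ext_absorb {Q : Set A} {u v : ℕ} (hvu : v < u) (hv : 1 ≤ v)
    (habs : IsUVAbsorbing Q u v) (hQC : IsCHyperideal Q) :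
    ∀ m : ℕ, ∀ L : List A, L.length = m → u ≤ m → (∀ e ∈ L, ¬IsUnitH e) → hProd L ⊆ Q →
      ∃ l₃, l₃.Sublist L ∧ l₃.length = v ∧ hProd l₃ ⊆ Q := by
  intro m
  induction m using Nat.strong_induction_on with
  | _ m ih =>
    intro L hLm hum hnon hsub
    rcases Nat.lt_or_ge u m with hlt | hge
    · -- m > u
      obtain ⟨a, b, rest, rfl⟩ : ∃ a b rest, L = a :: b :: rest := by
        match L with
        | [] => simp at hLm; omega
        | [x] => simp at hLm; omega
        | a :: b :: rest => exact ⟨a, b, rest, rfl⟩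
      have hab : ¬IsUnitH a := hnon a (by simp)
      obtain ⟨c₀, hc₀⟩ := hmul_nonempty a b
      have hc₀nu : ¬IsUnitH c₀ := nonunit_of_mem_hmul hab hc₀
      have hc₀mem : c₀ ∈ hProd [a, b] := by rwa [hmul_pair]
      have hsub1 : hProd (c₀ :: rest) ⊆ Q := by
        refine (hProd_cons_subset rest (by simp) hc₀mem).trans ?_
        simpa using hsub
      have hlen1 : (c₀ :: rest).length = m - 1 := by simp at hLm ⊢; omega
      have hnon1 : ∀ e ∈ c₀ :: rest, ¬IsUnitH e := by
        intro e he
        rcases List.mem_cons.1 he with rfl | h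
        · exact hc₀nu
        · exact hnon e (by simp [h])
      obtain ⟨l', hl'sub, hl'len, hl'Q⟩ := ih (m - 1) (by omega) _ hlen1 (by omega) hnon1 hsub1
      rcases List.sublist_cons_iff.1 hl'sub with hcase | ⟨s, rfl, hs⟩
      · exact ⟨l', (hcase.cons b).cons a, hl'len, hl'Q⟩
      · -- l' = c₀ :: s
        have hslen : s.length = v - 1 := by simp at hl'len; omega
        have habsne : (hProd (a :: b :: s) ∩ Q).Nonempty := by
          obtain ⟨w, hw⟩ := hProd_nonempty (c₀ :: s)
          have hw2 : w ∈ hProd ([a, b] ++ s) := hProd_cons_subset s (by simp) hc₀mem hw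
          exact ⟨w, by simpa using hw2, hl'Q hw⟩
        have habsQ : hProd (a :: b :: s) ⊆ Q := hQC.2 _ (by simp) habsne
        have hsubL : (a :: b :: s).Sublist (a :: b :: rest) := (hs.cons₂ b).cons₂ a
        have hlenabs : (a :: b :: s).length = v + 1 := by simp [hslen]; omega
        obtain ⟨mid, hmid1, hmid2, hmid3⟩ := sublist_extend hsubL (n := u)
          (by simp [hlenabs]; omega) (by simp at hLm ⊢; omega)
        obtain ⟨w, hw⟩ := hmid1.exists_perm_append
        have hmidQ : hProd mid ⊆ Q := by
          rw [hProd_perm hw]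
          exact hProd_append_subset hQC.1 (by simp) habsQ w
        have hmidnon : ∀ e ∈ mid, ¬IsUnitH e := fun e he => hnon e (hmid2.mem he)
        obtain ⟨l₃, h31, h32, h33⟩ := habs.2 mid hmid3 hmidnon hmidQ
        exact ⟨l₃, h31.trans hmid2, h32, h33⟩
    · -- m = u
      have : L.length = u := by omega
      exact habs.2 L this hnon hsub

end AuxDev5

section AuxDev6
variable {A : Type*} [AddCommGroup A] [One A] [CommHyperring A]

lemma prime_avoidance : ∀ (n : ℕ) (l : List (Set A)), l.length = n → l.Nodup →
    ∀ {I J : Set A}, IsHyperideal I → IsHyperideal J →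
    (∀ p ∈ l, IsPrimeHyperideal p ∧ IsCHyperideal p) →
    (∀ a ∈ I, a ∈ J ∨ ∃ p ∈ l, a ∈ p) → (∀ p ∈ l, ¬ I ⊆ p) → I ⊆ J := by
  classical
  intro n
  induction n using Nat.strong_induction_on with
  | _ n ih =>
    intro l hln hnd I J hI hJ hpr hcov hnsub
    by_cases hred : ∃ p ∈ l, ∀ a ∈ I, a ∈ J ∨ ∃ q ∈ l.erase p, a ∈ q
    · obtain ⟨p, hpl, hcov'⟩ := hred
      have hlt : (l.erase p).length < n := by
        have h1 := List.length_erase_add_one hpl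
        omega
      exact ih _ hlt _ rfl (hnd.erase p) hI hJ
        (fun q hq => hpr q (List.mem_of_mem_erase hq)) hcov'
        (fun q hq => hnsub q (List.mem_of_mem_erase hq))
    · push_neg at hred
      cases l with
      | nil =>
        intro a ha
        rcases hcov a ha with h | ⟨p, hp, _⟩
        · exact h
        · simp at hp
      | cons p t =>
        exfalso
        have hpnt : p ∉ t := (List.nodup_cons.1 hnd).1
        have hwit : ∀ q ∈ p :: t, ∃ a, a ∈ I ∧ a ∉ J ∧ (∀ r ∈ (p :: t).erase q, a ∉ r)
            ∧ a ∈ q := by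
          intro q hq
          obtain ⟨a, haI, hnot⟩ := hred q hq
          have haJ : a ∉ J := hnot.1
          have har : ∀ r ∈ (p :: t).erase q, a ∉ r := hnot.2
          have haq : a ∈ q := by
            rcases hcov a haI with h | ⟨r, hrl, har'⟩
            · exact absurd h haJ
            · by_cases hrq : r = q
              · exact hrq ▸ har'
              · exact absurd har' (har r ((List.Nodup.mem_erase_iff hnd).2 ⟨hrq, hrl⟩))
          exact ⟨a, haI, haJ, har, haq⟩
        obtain ⟨ap, hapI, hapJ, hapr, happ⟩ := hwit p (by simp)
        have haprt : ∀ r ∈ t, ap ∉ r := by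
          intro r hr
          apply hapr r
          rw [List.erase_cons_head]
          exact hr
        have hchoice : ∀ q : {q // q ∈ t}, ∃ a, a ∈ I ∧ a ∉ J ∧
            (∀ r ∈ (p :: t).erase q.1, a ∉ r) ∧ a ∈ q.1 :=
          fun q => hwit q.1 (List.mem_cons_of_mem _ q.2)
        choose wfun hwI hwJ hwr hwq using hchoice
        have hwfun_np : ∀ q : {q // q ∈ t}, wfun q ∉ p := by
          intro q
          apply hwr q p
          refine (List.Nodup.mem_erase_iff hnd).2 ⟨?_, by simp⟩
          intro h
          exact hpnt (h ▸ q.2)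
        have hwfun_mem : ∀ q : {q // q ∈ t}, wfun q ∈ t.attach.map wfun := by
          intro q
          exact List.mem_map.2 ⟨q, List.mem_attach _ _, rfl⟩
        have hpprime := (hpr p (by simp)).1
        have hpC := (hpr p (by simp)).2
        by_cases ha₀ : ∃ a₀, a₀ ∈ I ∧ ∀ r ∈ p :: t, a₀ ∉ r
        · obtain ⟨a₀, ha₀I, ha₀r⟩ := ha₀
          have ha₀J : a₀ ∈ J := by
            rcases hcov a₀ ha₀I with h | ⟨r, hrl, hr⟩
            · exact h
            · exact absurd hr (ha₀r r hrl)
          have hasne : (a₀ :: t.attach.map wfun) ≠ [] := by simp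
          have hasI : ∀ e ∈ a₀ :: t.attach.map wfun, e ∈ I := by
            intro e he
            rcases List.mem_cons.1 he with rfl | he'
            · exact ha₀I
            · obtain ⟨q, _, rfl⟩ := List.mem_map.1 he'
              exact hwI q
          have hasnp : ∀ e ∈ a₀ :: t.attach.map wfun, e ∉ p := by
            intro e he
            rcases List.mem_cons.1 he with rfl | he'
            · exact ha₀r p (by simp)
            · obtain ⟨q, _, rfl⟩ := List.mem_map.1 he'
              exact hwfun_np q
          obtain ⟨w, hw⟩ := hProd_nonempty (a₀ :: t.attach.map wfun)
          have hwJ' : w ∈ J := hProd_subset_of_mem hJ (by simp) ha₀J hw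
          have hwq' : ∀ q ∈ t, w ∈ q := by
            intro q hq
            exact hProd_subset_of_mem (hpr q (List.mem_cons_of_mem _ hq)).1.1.1
              (List.mem_cons_of_mem _ (hwfun_mem ⟨q, hq⟩)) (hwq ⟨q, hq⟩) hw
          have hwnp : w ∉ p := by
            intro hwp
            have h1 : hProd (a₀ :: t.attach.map wfun) ⊆ p := hpC.2 _ hasne ⟨w, hw, hwp⟩
            obtain ⟨e, heas, hep⟩ := exists_mem_of_hProd_subset_prime hpprime hasne h1
            exact hasnp e heas hep
          have hwI' : w ∈ I := hProd_subset_of_mem hI (by simp) ha₀I hw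
          have hcI : ap + w ∈ I := hI.add_mem' hapI hwI'
          rcases hcov _ hcI with hc | ⟨r, hrl, hcr⟩
          · exact hapJ (by simpa using hJ.sub_mem' hc hwJ')
          · rcases List.mem_cons.1 hrl with rfl | hrt
            · exact hwnp (by simpa using hpprime.1.1.2.1 _ hcr _ happ)
            · exact haprt r hrt
                (by simpa using ((hpr r (List.mem_cons_of_mem _ hrt)).1.1.1).sub_mem' hcr (hwq' r hrt))
        · push_neg at ha₀
          by_cases ht : t = []
          · refine hnsub p (by simp) fun a ha => ?_
            obtain ⟨r, hr, har⟩ := ha₀ a ha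
            rw [ht] at hr
            simp only [List.mem_singleton] at hr
            exact hr ▸ har
          · have hasne : t.attach.map wfun ≠ [] := by
              simp [List.map_eq_nil_iff, ht]
            obtain ⟨w, hw⟩ := hProd_nonempty (t.attach.map wfun)
            have hwq' : ∀ q ∈ t, w ∈ q := by
              intro q hq
              exact hProd_subset_of_mem (hpr q (List.mem_cons_of_mem _ hq)).1.1.1
                (hwfun_mem ⟨q, hq⟩) (hwq ⟨q, hq⟩) hw
            have hwnp : w ∉ p := by
              intro hwp
              have h1 : hProd (t.attach.map wfun) ⊆ p := hpC.2 _ hasne ⟨w, hw, hwp⟩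
              obtain ⟨e, heas, hep⟩ := exists_mem_of_hProd_subset_prime hpprime hasne h1
              obtain ⟨q, _, rfl⟩ := List.mem_map.1 heas
              exact hwfun_np q hep
            have hwI' : w ∈ I := by
              obtain ⟨q0, hq0⟩ := List.exists_mem_of_ne_nil t ht
              exact hProd_subset_of_mem hI (hwfun_mem ⟨q0, hq0⟩) (hwI ⟨q0, hq0⟩) hw
            have hcI : ap + w ∈ I := hI.add_mem' hapI hwI'
            obtain ⟨r, hrl, hcr⟩ := ha₀ _ hcI
            rcases List.mem_cons.1 hrl with rfl | hrt
            · exact hwnp (by simpa using hpprime.1.1.2.1 _ hcr _ happ)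
            · exact haprt r hrt
                (by simpa using ((hpr r (List.mem_cons_of_mem _ hrt)).1.1.1).sub_mem' hcr (hwq' r hrt))

end AuxDev6


/-- if `Q` is a `(u,v)`-absorbing strong `𝒞`-hyperideal with `2 ≤ v < u`
whose only minimal prime `𝒞`-hyperideals are `P₁,…,P_v`, and `zᵢ ∈ Pᵢ∖⋃_{j≠i}P_j`,
then `P_j ∘ ∏_{i≠j} zᵢ ⊆ Q` for every `j`. -/
theorem sMul_hProd_subset (Q : Set A) (u v : ℕ) (h2v : 2 ≤ v) (hvu : v < u)
    (habs : IsUVAbsorbing Q u v) (hstrong : IsStrongCHyperideal Q)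
    (P : Fin v → Set A) (hinj : Function.Injective P)
    (hP : ∀ i, IsCHyperideal (P i) ∧ MinimalPrimeOver Q (P i))
    (honly : ∀ P' : Set A, IsCHyperideal P' → MinimalPrimeOver Q P' → ∃ i, P' = P i)
    (z : Fin v → A) (hz : ∀ i, z i ∈ P i ∧ ∀ j, j ≠ i → z i ∉ P j) :
    ∀ j : Fin v,
      sMul (P j) (hProd (((List.finRange v).filter (fun i => i ≠ j)).map z)) ⊆ Q := by
  classical
  have hQC : IsCHyperideal Q := hstrong.toC
  have hQideal : IsHyperideal Q := hQC.1
  intro j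
  set zsl : List A := ((List.finRange v).filter (fun i => i ≠ j)).map z with hzsldef
  have hmemzsl : ∀ i : Fin v, i ≠ j → z i ∈ zsl := by
    intro i hi
    refine List.mem_map.2 ⟨i, List.mem_filter.2 ⟨List.mem_finRange i, ?_⟩, rfl⟩
    simpa using hi
  have hzslelem : ∀ e ∈ zsl, ∃ i, i ≠ j ∧ e = z i := by
    intro e he
    obtain ⟨i, hi, rfl⟩ := List.mem_map.1 he
    have h2 := (List.mem_filter.1 hi).2
    exact ⟨i, by simpa using h2, rfl⟩
  obtain ⟨i₀, hi₀⟩ : ∃ i : Fin v, i ≠ j := by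
    by_contra h
    push_neg at h
    have h0 := h ⟨0, by omega⟩
    have h1 := h ⟨1, by omega⟩
    rw [← h1] at h0
    simp [Fin.ext_iff] at h0
  have hzslne : zsl ≠ [] := List.ne_nil_of_mem (hmemzsl i₀ hi₀)
  have hPjideal : ∀ k, IsHyperideal (P k) := fun k => (hP k).2.1.1.1
  have hQsub : ∀ k, Q ⊆ P k := fun k => (hP k).2.2.1
  have hnonunit : ∀ k : Fin v, ∀ x ∈ P k, ¬IsUnitH x :=
    fun k x hx => not_unit_of_mem_proper (hP k).2.1.1 hx
  -- Step 1: separated elements of `P j` multiply into `Q`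
  have hL1 : ∀ x, x ∈ P j → (∀ k, k ≠ j → x ∉ P k) → hProd (x :: zsl) ⊆ Q := by
    intro x hxj hxk
    obtain ⟨t, ht⟩ := hProd_nonempty (x :: zsl)
    have htP : ∀ i, t ∈ P i := by
      intro i
      by_cases hij : i = j
      · subst hij; exact hProd_subset_of_mem (hPjideal i) (by simp) hxj ht
      · exact hProd_subset_of_mem (hPjideal i)
          (List.mem_cons_of_mem _ (hmemzsl i hij)) (hz i).1 ht
    obtain ⟨n, hn1, hnQ⟩ := mem_rad_of_mem_all hQC honly htP
    set N := n + u + v with hNdef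
    have hNQ : hPow t N ⊆ Q := hPow_subset_of_le hQideal hn1 hnQ (by omega)
    set LN := (List.replicate N (x :: zsl)).flatten with hLNdef
    have hsubLN : hPow t N ⊆ hProd LN := hPow_subset_prod_repeat (by simp) ht (by omega)
    have hLNelem : ∀ e ∈ LN, e ∈ x :: zsl := by
      intro e he
      obtain ⟨L', hL', he'⟩ := List.mem_flatten.1 he
      rwa [List.eq_of_mem_replicate hL'] at he'
    have hLNlen : LN.length = N * (x :: zsl).length := by
      simp [hLNdef, List.length_flatten, Nat.mul_comm]
    have hLNne : LN ≠ [] := by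
      intro h
      have hpos : 0 < N * (x :: zsl).length := Nat.mul_pos (by omega) (by simp)
      rw [← hLNlen, h] at hpos
      simp at hpos
    have hLNQ : hProd LN ⊆ Q := by
      refine hQC.2 LN hLNne ?_
      obtain ⟨e, he⟩ := hPow_nonempty t N
      exact ⟨e, hsubLN he, hNQ he⟩
    have hLNnon : ∀ e ∈ LN, ¬IsUnitH e := by
      intro e he
      rcases List.mem_cons.1 (hLNelem e he) with rfl | he'
      · exact hnonunit j e hxj
      · obtain ⟨i, hij, rfl⟩ := hzslelem e he'
        exact hnonunit i _ (hz i).1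
    have hulen : u ≤ LN.length := by
      rw [hLNlen]
      calc u ≤ N := by omega
        _ = N * 1 := (Nat.mul_one N).symm
        _ ≤ N * (x :: zsl).length := Nat.mul_le_mul_left N (by simp)
    obtain ⟨l₃, h3sub, h3len, h3Q⟩ :=
      ext_absorb hvu (by omega) habs hQC LN.length LN rfl hulen hLNnon hLNQ
    set g : Fin v → A := fun i => if i = j then x else z i with hgdef
    have hgx : g j = x := by simp [hgdef]
    have hgz : ∀ i, i ≠ j → g i = z i := by intro i hi; simp [hgdef, hi]
    have hginj : Function.Injective g := by
      intro i₁ i₂ he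
      by_cases h1 : i₁ = j <;> by_cases h2 : i₂ = j
      · rw [h1, h2]
      · exfalso
        rw [h1, hgx, hgz i₂ h2] at he
        exact hxk i₂ h2 (by rw [he]; exact (hz i₂).1)
      · exfalso
        rw [h2, hgx, hgz i₁ h1] at he
        exact hxk i₁ h1 (by rw [← he]; exact (hz i₁).1)
      · rw [hgz i₁ h1, hgz i₂ h2] at he
        by_contra hne
        exact (hz i₁).2 i₂ (fun h => hne h.symm) (by rw [he]; exact (hz i₂).1)
    have hgmem : ∀ i, g i ∈ l₃ := by
      intro i
      have h3sub' : hProd l₃ ⊆ P i := h3Q.trans (hQsub i)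
      have h3ne : l₃ ≠ [] := by
        intro h
        rw [h] at h3len
        simp at h3len
        omega
      obtain ⟨e, hel, heP⟩ := exists_mem_of_hProd_subset_prime (hP i).2.1 h3ne h3sub'
      have he' := hLNelem e (h3sub.subset hel)
      rcases List.mem_cons.1 he' with rfl | hez
      · by_cases hij : i = j
        · subst hij; rw [hgx]; exact hel
        · exact absurd heP (hxk i hij)
      · obtain ⟨i', hi'j, rfl⟩ := hzslelem e hez
        by_cases hii : i' = i
        · subst hii
          rw [hgz i' hi'j]; exact hel
        · exact absurd heP ((hz i').2 i (fun h => hii h.symm))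
    have hglnd : ((List.finRange v).map g).Nodup :=
      List.Nodup.map hginj (List.nodup_finRange v)
    have hglsub : ∀ a ∈ (List.finRange v).map g, a ∈ l₃ := by
      intro a ha
      obtain ⟨i, _, rfl⟩ := List.mem_map.1 ha
      exact hgmem i
    have hperm : ((List.finRange v).map g).Perm l₃ :=
      (List.Nodup.subperm hglnd hglsub).perm_of_length_le (by simp [h3len])
    have hperm2 : ((List.finRange v).map g).Perm (x :: zsl) := by
      have h1 : (List.finRange v).Perm (j :: (List.finRange v).erase j) :=
        List.perm_cons_erase (List.mem_finRange j)
      have h2 := h1.map g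
      have h3 : ((List.finRange v).erase j) = (List.finRange v).filter (fun i => i ≠ j) := by
        rw [List.Nodup.erase_eq_filter (List.nodup_finRange v) j]
        refine List.filter_congr ?_
        intro i _
        by_cases h : i = j <;> simp [bne, h]
      have h4 : ((List.finRange v).erase j).map g = zsl := by
        rw [h3, hzsldef]
        exact List.map_congr_left fun i hi => hgz i (by simpa using (List.mem_filter.1 hi).2)
      have h5 : (j :: (List.finRange v).erase j).map g = x :: zsl := by
        rw [List.map_cons, hgx, h4]
      rw [h5] at h2
      exact h2
    rw [← hProd_perm hperm2, hProd_perm hperm]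
    exact h3Q
  -- The hyperideal `Jset`
  set Jset : Set A := {a | hProd (a :: zsl) ⊆ Q} with hJdef
  have hJmul : ∀ a ∈ Jset, ∀ c ∈ hProd zsl, hmul a c ⊆ Q := by
    intro a ha c hc e he
    apply ha
    rw [hProd_cons a zsl hzslne]
    simp only [sMul, Set.mem_iUnion]
    exact ⟨a, rfl, c, hc, he⟩
  have hJmem : ∀ a, (∀ c ∈ hProd zsl, hmul a c ⊆ Q) → a ∈ Jset := by
    intro a h e he
    rw [hProd_cons a zsl hzslne] at he
    simp only [sMul, Set.mem_iUnion] at he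
    obtain ⟨x', hx', y, hy, he⟩ := he
    rw [Set.mem_singleton_iff] at hx'
    subst hx'
    exact h y hy he
  have hJideal : IsHyperideal Jset := by
    refine ⟨⟨0, hJmem 0 ?_⟩, ?_, ?_⟩
    · intro c hc e he
      exact hQideal.2.2 c 0 hQideal.zero_mem' (hmul_comm 0 c ▸ he)
    · intro a ha b hb
      refine hJmem _ ?_
      intro c hc e he
      rw [hmul_comm, sub_eq_add_neg] at he
      obtain ⟨f, hf, gg, hgg, rfl⟩ := hmul_add c a (-b) he
      have hf' : f ∈ Q := hJmul a ha c hc (hmul_comm c a ▸ hf)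
      rw [hmul_neg] at hgg
      obtain ⟨g', hg', rfl⟩ := hgg
      have hg'' : g' ∈ Q := hJmul b hb c hc (hmul_comm c b ▸ hg')
      simpa [sub_eq_add_neg] using hQideal.sub_mem' hf' hg''
    · intro r a ha e he
      refine hJmem e ?_
      intro c hc e' he'
      have h1 : e' ∈ ⋃ b ∈ hmul r a, hmul b c := Set.mem_biUnion he he'
      rw [← hmul_assoc] at h1
      obtain ⟨d, hd, h2⟩ := Set.mem_iUnion₂.1 h1
      exact hQideal.2.2 r d (hJmul a ha c hc hd) h2
  -- prime avoidance
  set lps : List (Set A) := ((List.finRange v).filter (fun i => i ≠ j)).map P with hlps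
  have hlpsnd : lps.Nodup :=
    List.Nodup.map hinj ((List.nodup_finRange v).filter _)
  have hlpsmem : ∀ q ∈ lps, ∃ k, k ≠ j ∧ q = P k := by
    intro q hq
    obtain ⟨k, hk, rfl⟩ := List.mem_map.1 hq
    exact ⟨k, by simpa using (List.mem_filter.1 hk).2, rfl⟩
  have hlpsmem' : ∀ k : Fin v, k ≠ j → P k ∈ lps := fun k hk =>
    List.mem_map.2 ⟨k, List.mem_filter.2 ⟨List.mem_finRange k, by simpa using hk⟩, rfl⟩
  have hcov : ∀ a ∈ P j, a ∈ Jset ∨ ∃ p ∈ lps, a ∈ p := by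
    intro a ha
    by_cases hall : ∀ k, k ≠ j → a ∉ P k
    · exact Or.inl (hL1 a ha hall)
    · push_neg at hall
      obtain ⟨k, hkj, hak⟩ := hall
      exact Or.inr ⟨P k, hlpsmem' k hkj, hak⟩
  have hnsub : ∀ p ∈ lps, ¬ P j ⊆ p := by
    intro q hq hsub
    obtain ⟨k, hkj, rfl⟩ := hlpsmem q hq
    exact (hz j).2 k hkj (hsub (hz j).1)
  have hPjJ : P j ⊆ Jset :=
    prime_avoidance lps.length lps rfl hlpsnd (hPjideal j) hJideal
      (fun q hq => by obtain ⟨k, _, rfl⟩ := hlpsmem q hq; exact ⟨(hP k).2.1, (hP k).1⟩)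
      hcov hnsub
  intro w hw
  simp only [sMul, Set.mem_iUnion] at hw
  obtain ⟨x, hx, y, hy, hw⟩ := hw
  exact hJmul x (hPjJ hx) y hy hw
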